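/- arXiv:2012.06353 — 3 statements merged into one kernel-verified Lean document; each statement's English description precedes it below -/
import Mathlib

section
/- Let W : Ω × ℝ₊^d → ℝ be a jointly measurable random field with P-almost surely continuous paths such that for every deterministic z ∈ ℝ₊^d the law of W(z) is the Gaussian distribution N(μ(z), σ_W²(z)), where μ : ℝ₊^d → ℝ and σ_W² : ℝ₊^d → ℝ₊ are functions. Let Z = (Z₁,…,Z_d) : Ω → ℝ₊^d be a random vector independent of the σ-algebra generated by W. Then for every ξ ∈ ℝ, the characteristic function of L := W(Z₁,…,Z_d) satisfies E[exp(iξL)] = E[exp(iξ μ(Z₁,…,Z_d) − ½ ξ² σ_W²(Z₁,…,Z_d))]. -/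
open MeasureTheory ProbabilityTheory Complex Real Filter Topology
open scoped NNReal ENNReal

lemma norm_cexp_I_mul (ξ x : ℝ) : ‖Complex.exp (Complex.I * ξ * x)‖ = 1 := by
  rw [Complex.norm_exp]
  simp [Complex.mul_re]

lemma integral_cexp_I_mul_gaussianReal (m : ℝ) (v : ℝ≥0) (ξ : ℝ) :
    ∫ x : ℝ, Complex.exp (Complex.I * ξ * x) ∂(gaussianReal m v)
      = Complex.exp (Complex.I * ξ * m - ξ ^ 2 * (v : ℝ) / 2) := by
  by_cases hv : v = 0
  · subst hv
    rw [gaussianReal_zero_var, integral_dirac]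
    norm_num
  · have hv0 : (0:ℝ) < (v:ℝ) := lt_of_le_of_ne v.2 (by exact_mod_cast (Ne.symm hv))
    have hvC : ((v:ℝ):ℂ) ≠ 0 := by exact_mod_cast hv0.ne'
    rw [gaussianReal_of_var_ne_zero _ hv]
    have hpdf : gaussianPDF m v = fun x => ((gaussianPDFReal m v x).toNNReal : ℝ≥0∞) := rfl
    rw [hpdf, integral_withDensity_eq_integral_smul
      ((measurable_gaussianPDFReal m v).real_toNNReal)]
    set b : ℂ := ((-(1/(2*(v:ℝ))) : ℝ) : ℂ) with hb
    set cc : ℂ := ((m/(v:ℝ) : ℝ) : ℂ) + Complex.I * ξ with hcc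
    set dd : ℂ := ((-(m^2)/(2*(v:ℝ)) : ℝ) : ℂ) with hdd
    have hbre : b.re < 0 := by
      rw [hb]; simp; positivity
    have hint : ∀ x : ℝ, (gaussianPDFReal m v x).toNNReal • Complex.exp (Complex.I * ξ * x)
        = ((Real.sqrt (2 * π * v))⁻¹ : ℂ) * Complex.exp (b * x^2 + cc * x + dd) := by
      intro x
      have hnn : (0:ℝ) ≤ gaussianPDFReal m v x := gaussianPDFReal_nonneg m v x
      rw [NNReal.smul_def, Real.coe_toNNReal _ hnn]
      rw [gaussianPDFReal]
      have : ((((Real.sqrt (2 * π * v))⁻¹ * rexp (- (x - m)^2 / (2 * v))) : ℝ)) •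
          Complex.exp (Complex.I * ξ * x)
          = ((Real.sqrt (2 * π * v))⁻¹ : ℂ) *
            (Complex.exp (((- (x - m)^2 / (2 * (v:ℝ))) : ℝ)) * Complex.exp (Complex.I * ξ * x)) := by
        push_cast
        rw [Complex.real_smul]
        push_cast
        ring
      rw [this, ← Complex.exp_add]
      congr 2
      rw [hb, hcc, hdd]
      push_cast
      field_simp
      ring
    simp_rw [hint]
    rw [integral_const_mul, integral_cexp_quadratic hbre]
    have h1 : ((π : ℂ) / -b) = (((2 * π * v : ℝ)) : ℂ) := by
      rw [hb]
      push_cast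
      field_simp
    have h2 : ((π:ℂ)/ -b) ^ (1/2 : ℂ) = ((Real.sqrt (2 * π * v) : ℝ) : ℂ) := by
      rw [h1]
      rw [show ((1/2 : ℂ)) = (((1/2 : ℝ)):ℂ) by norm_num]
      rw [← Complex.ofReal_cpow (by positivity)]
      rw [Real.sqrt_eq_rpow]
    have hsn : ((Real.sqrt (2 * π * v) : ℝ) : ℂ) ≠ 0 := by
      have : (0:ℝ) < Real.sqrt (2 * π * v) := Real.sqrt_pos.2 (by positivity)
      exact_mod_cast this.ne'
    rw [h2, ← mul_assoc, inv_mul_cancel₀ hsn, one_mul]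
    congr 1
    rw [hb, hcc, hdd]
    have h4b : (4 : ℂ) * ((-(1/(2*(v:ℝ))) : ℝ) : ℂ) ≠ 0 := by
      push_cast
      field_simp
      exact neg_ne_zero.mpr (div_ne_zero (by norm_num) (mul_ne_zero two_ne_zero hvC))
    push_cast
    field_simp
    ring_nf
    simp [Complex.I_sq]
    ring

lemma measurable_comp_of_countable_range {α β γ : Type*} [MeasurableSpace α] [MeasurableSpace β]
    [MeasurableSingletonClass β] [MeasurableSpace γ] {g : α → β} (hg : Measurable g)
    (hc : (Set.range g).Countable) (φ : β → γ) : Measurable fun a => φ (g a) := by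
  intro B _
  have h : (fun a => φ (g a)) ⁻¹' B = ⋃ c ∈ {c | c ∈ Set.range g ∧ φ c ∈ B}, g ⁻¹' {c} := by
    ext a
    simp only [Set.mem_preimage, Set.mem_iUnion, Set.mem_setOf_eq, Set.mem_singleton_iff]
    constructor
    · intro h; exact ⟨g a, ⟨⟨a, rfl⟩, h⟩, rfl⟩
    · rintro ⟨c, ⟨_, hc2⟩, rfl⟩; exact hc2
  rw [h]
  exact MeasurableSet.biUnion (hc.mono fun c h => h.1) fun c _ => hg (measurableSet_singleton c)

noncomputable def dyadicApprox (d n : ℕ) (z : Fin d → ℝ≥0) : Fin d → ℝ≥0 :=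
  fun i => (⌊(z i : ℝ) * 2 ^ n⌋₊ : ℝ≥0) / 2 ^ n

lemma measurable_dyadicApprox (d n : ℕ) : Measurable (dyadicApprox d n) := by
  apply measurable_pi_lambda
  intro i
  apply Measurable.div_const
  have h1 : Measurable fun z : Fin d → ℝ≥0 => (z i : ℝ) * 2 ^ n :=
    (measurable_coe_nnreal_real.comp (measurable_pi_apply i)).mul_const _
  exact measurable_from_top.comp (Nat.measurable_floor.comp h1)

lemma countable_range_dyadicApprox (d n : ℕ) : (Set.range (dyadicApprox d n)).Countable := by
  have h : Set.range (dyadicApprox d n)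
      ⊆ Set.range (fun k : Fin d → ℕ => fun i => (k i : ℝ≥0) / 2 ^ n) := by
    rintro _ ⟨z, rfl⟩
    exact ⟨fun i => ⌊(z i : ℝ) * 2 ^ n⌋₊, rfl⟩
  exact (Set.countable_range _).mono h

lemma tendsto_dyadicApprox (d : ℕ) (z : Fin d → ℝ≥0) :
    Filter.Tendsto (fun n => dyadicApprox d n z) Filter.atTop (nhds z) := by
  rw [tendsto_pi_nhds]
  intro i
  rw [← NNReal.tendsto_coe]
  have hcoe : ∀ n : ℕ, ((dyadicApprox d n z i : ℝ≥0) : ℝ) = (⌊(z i : ℝ) * 2 ^ n⌋₊ : ℝ) / 2 ^ n := by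
    intro n; simp [dyadicApprox]
  simp_rw [hcoe]
  have hpow : ∀ n : ℕ, (0:ℝ) < 2 ^ n := fun n => by positivity
  have hup : ∀ n : ℕ, (⌊(z i : ℝ) * 2 ^ n⌋₊ : ℝ) / 2 ^ n ≤ (z i : ℝ) := by
    intro n
    rw [div_le_iff₀ (hpow n)]
    exact Nat.floor_le (by positivity)
  have hlow : ∀ n : ℕ, (z i : ℝ) - ((2:ℝ) ^ n)⁻¹ ≤ (⌊(z i : ℝ) * 2 ^ n⌋₊ : ℝ) / 2 ^ n := by
    intro n
    rw [le_div_iff₀ (hpow n), sub_mul, inv_mul_cancel₀ (hpow n).ne']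
    exact (Nat.sub_one_lt_floor _).le
  have hlim : Filter.Tendsto (fun n : ℕ => (z i : ℝ) - ((2:ℝ) ^ n)⁻¹) Filter.atTop (nhds (z i : ℝ)) := by
    have h2 : Filter.Tendsto (fun n : ℕ => ((2:ℝ) ^ n)⁻¹) Filter.atTop (nhds 0) :=
      tendsto_inv_atTop_zero.comp (tendsto_pow_atTop_atTop_of_one_lt one_lt_two)
    simpa using tendsto_const_nhds.sub h2
  exact tendsto_of_tendsto_of_tendsto_of_le_of_le hlim tendsto_const_nhds hlow hup

lemma integral_eval_eq_integral_avg {Ω α : Type*} [MeasurableSpace Ω] [MeasurableSpace α]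
    [MeasurableSingletonClass α] (P : Measure Ω) [IsProbabilityMeasure P]
    {g : Ω → α} (hg : Measurable g) (hgc : (Set.range g).Countable)
    {F : Ω → α → ℂ} (hFm : ∀ c, AEStronglyMeasurable (fun ω => F ω c) P)
    (hFb : ∀ ω c, ‖F ω c‖ ≤ 1)
    (hfac : ∀ c, ∫ ω in g ⁻¹' {c}, F ω c ∂P = (P (g ⁻¹' {c})).toReal • ∫ ω, F ω c ∂P) :
    ∫ ω, F ω (g ω) ∂P = ∫ ω, (∫ ω', F ω' (g ω) ∂P) ∂P := by
  haveI : Countable (Set.range g) := hgc.to_subtype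
  set S := Set.range g with hS
  have hA : ∀ c : α, MeasurableSet (g ⁻¹' {c}) := fun c => hg (measurableSet_singleton c)
  have hrep : ∀ (h : Ω → α → ℂ) (ω : Ω),
      h ω (g ω) = ∑' c : S, Set.indicator (g ⁻¹' {(c : α)}) (fun ω' => h ω' c) ω := by
    intro h ω
    rw [tsum_eq_single (⟨g ω, Set.mem_range_self ω⟩ : S) ?_]
    · simp
    · intro c hc
      apply Set.indicator_of_notMem
      intro hmem
      exact hc (Subtype.ext hmem.symm)
  have hdisj : Pairwise fun (c c' : S) => Disjoint (g ⁻¹' {(c:α)}) (g ⁻¹' {(c':α)}) :=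
    fun c c' hcc => Set.disjoint_left.2 fun ω h1 h2 => hcc (Subtype.ext (h1.symm.trans h2))
  have hsum_meas : ∑' c : S, P (g ⁻¹' {(c:α)}) ≠ ⊤ := by
    rw [← measure_iUnion hdisj fun c => hA _]
    exact (measure_lt_top P _).ne
  have hbound : ∀ (h : Ω → α → ℂ), (∀ ω c, ‖h ω c‖ ≤ 1) → ∀ c : S,
      ∫⁻ ω, ‖Set.indicator (g ⁻¹' {(c:α)}) (fun ω' => h ω' c) ω‖₊ ∂P ≤ P (g ⁻¹' {(c:α)}) := by
    intro h hb c
    have heq : ∀ ω, (‖Set.indicator (g ⁻¹' {(c:α)}) (fun ω' => h ω' c) ω‖₊ : ℝ≥0∞)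
        = Set.indicator (g ⁻¹' {(c:α)}) (fun ω' => (‖h ω' c‖₊ : ℝ≥0∞)) ω := by
      intro ω
      rw [nnnorm_indicator_eq_indicator_nnnorm]
      exact (ENNReal.coe_indicator _ _ _)
    simp_rw [heq]
    rw [lintegral_indicator (hA (c:α))]
    calc ∫⁻ ω in g ⁻¹' {(c:α)}, (‖h ω c‖₊ : ℝ≥0∞) ∂P
        ≤ ∫⁻ _ in g ⁻¹' {(c:α)}, 1 ∂P := by
          apply lintegral_mono
          intro ω
          have := hb ω c
          simp only [ENNReal.coe_le_one_iff]
          rwa [← NNReal.coe_le_coe, coe_nnnorm, NNReal.coe_one]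
      _ = P (g ⁻¹' {(c:α)}) := by simp
  have h1 : ∫ ω, F ω (g ω) ∂P = ∑' c : S, ∫ ω in g ⁻¹' {(c:α)}, F ω (c:α) ∂P := by
    rw [show (fun ω => F ω (g ω)) = fun ω =>
        ∑' c : S, Set.indicator (g ⁻¹' {(c : α)}) (fun ω' => F ω' c) ω from funext (hrep F)]
    rw [integral_tsum (fun c : S => (hFm (c:α)).indicator (hA _))
      (ne_top_of_le_ne_top hsum_meas (ENNReal.tsum_le_tsum (hbound F hFb)))]
    congr 1
    ext c
    exact integral_indicator (hA _)
  have hφb : ∀ (_ : Ω) (c : α), ‖∫ ω', F ω' c ∂P‖ ≤ 1 := by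
    intro _ c
    calc ‖∫ ω', F ω' c ∂P‖ ≤ 1 * (P Set.univ).toReal :=
          norm_integral_le_of_norm_le_const (ae_of_all _ fun ω => hFb ω c)
      _ = 1 := by simp
  have h3 : ∫ ω, (∫ ω', F ω' (g ω) ∂P) ∂P
      = ∑' c : S, (P (g ⁻¹' {(c:α)})).toReal • ∫ ω', F ω' (c:α) ∂P := by
    rw [show (fun ω => ∫ ω', F ω' (g ω) ∂P) = fun ω =>
        ∑' c : S, Set.indicator (g ⁻¹' {(c : α)}) (fun _ => ∫ ω', F ω' (c:α) ∂P) ω from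
        funext (hrep fun _ c => ∫ ω', F ω' c ∂P)]
    rw [integral_tsum (fun c : S => aestronglyMeasurable_const.indicator (hA ((c:α))))
      (ne_top_of_le_ne_top hsum_meas (ENNReal.tsum_le_tsum
        (hbound (fun _ c => ∫ ω', F ω' c ∂P) hφb)))]
    congr 1
    ext c
    rw [integral_indicator (hA _), setIntegral_const]
    rfl
  rw [h1, h3]
  exact tsum_congr fun c => hfac (c:α)

/-- Let `W : Ω × ℝ₊^d → ℝ` be a jointly measurable random field with
`P`-a.s. continuous paths such that `W(z) ∼ N(μ z, σ_W²(z))` for every deterministic `z`.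
Let `Z` be a random vector independent of the σ-algebra generated by `W`. Then the
characteristic function of `L := W(Z)` satisfies
`E[exp(iξL)] = E[exp(iξ μ(Z) − ½ ξ² σ_W²(Z))]`. -/
theorem charFun_subordinated_GRF
    {Ω : Type*} [MeasurableSpace Ω] (P : Measure Ω) [IsProbabilityMeasure P]
    (d : ℕ) (W : Ω → (Fin d → NNReal) → ℝ)
    (hW : Measurable fun p : Ω × (Fin d → NNReal) => W p.1 p.2)
    (hWcont : ∀ᵐ ω ∂P, Continuous (W ω))
    (μ : (Fin d → NNReal) → ℝ) (σW2 : (Fin d → NNReal) → NNReal)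
    (hlaw : ∀ z : Fin d → NNReal,
      Measure.map (fun ω => W ω z) P = gaussianReal (μ z) (σW2 z))
    (Z : Ω → Fin d → NNReal) (hZ : Measurable Z)
    (hindep : Indep (MeasurableSpace.comap Z inferInstance)
      (⨆ x : Fin d → NNReal, MeasurableSpace.comap (fun ω => W ω x) inferInstance) P)
    (ξ : ℝ) :
    ∫ ω, Complex.exp (Complex.I * ξ * (W ω (Z ω))) ∂P
      = ∫ ω, Complex.exp (Complex.I * ξ * (μ (Z ω)) - ξ ^ 2 * (σW2 (Z ω) : ℝ) / 2) ∂P := by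
  classical
  -- continuity / measurability of the elementary pieces
  have hcont : Continuous fun x : ℝ => Complex.exp (Complex.I * ξ * x) := by
    fun_prop
  have hXm : ∀ c : Fin d → NNReal, Measurable fun ω => W ω c := fun c =>
    hW.comp (measurable_id.prodMk measurable_const)
  have hFm : ∀ c : Fin d → NNReal,
      Measurable fun ω => Complex.exp (Complex.I * ξ * (W ω c)) := fun c =>
    hcont.measurable.comp (hXm c)
  -- the "characteristic function" of W at a deterministic point
  have hφeq : ∀ z, (∫ ω, Complex.exp (Complex.I * ξ * (W ω z)) ∂P)
      = Complex.exp (Complex.I * ξ * (μ z) - ξ ^ 2 * (σW2 z : ℝ) / 2) := by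
    intro z
    have h := integral_cexp_I_mul_gaussianReal (μ z) (σW2 z) ξ
    rwa [← hlaw z, integral_map (hXm z).aemeasurable hcont.aestronglyMeasurable] at h
  -- the dyadic approximations of Z
  set g : ℕ → Ω → Fin d → NNReal := fun n ω => dyadicApprox d n (Z ω) with hg
  have hgm : ∀ n, Measurable (g n) := fun n => (measurable_dyadicApprox d n).comp hZ
  have hgc : ∀ n, (Set.range (g n)).Countable := fun n =>
    (countable_range_dyadicApprox d n).mono (Set.range_comp_subset_range Z (dyadicApprox d n))
  -- the independence factorization
  have key : ∀ (A : Set Ω), MeasurableSet[MeasurableSpace.comap Z inferInstance] A →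
      ∀ c, ∫ ω in A, Complex.exp (Complex.I * ξ * (W ω c)) ∂P
        = (P A).toReal • ∫ ω, Complex.exp (Complex.I * ξ * (W ω c)) ∂P := by
    intro A hA c
    have hmap : Measure.map (fun ω => W ω c) (P.restrict A)
        = P A • Measure.map (fun ω => W ω c) P := by
      ext B hB
      rw [Measure.map_apply (hXm c) hB, Measure.restrict_apply ((hXm c) hB),
        Measure.smul_apply, smul_eq_mul, Measure.map_apply (hXm c) hB]
      have hBW : MeasurableSet[⨆ x : Fin d → NNReal,
          MeasurableSpace.comap (fun ω => W ω x) inferInstance] ((fun ω => W ω c) ⁻¹' B) :=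
        (le_iSup (fun x : Fin d → NNReal =>
          MeasurableSpace.comap (fun ω => W ω x) inferInstance) c) _ ⟨B, hB, rfl⟩
      have h := (Indep_iff _ _ _).1 hindep A _ hA hBW
      rw [Set.inter_comm, h, mul_comm]
    rw [← integral_map (hXm c).aemeasurable hcont.aestronglyMeasurable,
      hmap, integral_smul_measure,
      integral_map (hXm c).aemeasurable hcont.aestronglyMeasurable]
  -- Step B : for each n the law of the discretized field factorizes
  have hstep : ∀ n, ∫ ω, Complex.exp (Complex.I * ξ * (W ω (g n ω))) ∂P
      = ∫ ω, (∫ ω', Complex.exp (Complex.I * ξ * (W ω' (g n ω))) ∂P) ∂P := by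
    intro n
    refine integral_eval_eq_integral_avg P (hgm n) (hgc n)
      (fun c => (hFm c).aestronglyMeasurable)
      (fun ω c => le_of_eq (norm_cexp_I_mul ξ (W ω c))) ?_
    intro c
    exact key _ ⟨(dyadicApprox d n) ⁻¹' {c},
      (measurable_dyadicApprox d n) (measurableSet_singleton c), rfl⟩ c
  -- Step C : limits
  have hlimL : Tendsto (fun n => ∫ ω, Complex.exp (Complex.I * ξ * (W ω (g n ω))) ∂P)
      atTop (nhds (∫ ω, Complex.exp (Complex.I * ξ * (W ω (Z ω))) ∂P)) := by
    refine tendsto_integral_of_dominated_convergence (fun _ => 1)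
      (fun n => ((hcont.measurable.comp (hW.comp
        (measurable_id.prodMk (hgm n)))).aestronglyMeasurable)) (integrable_const 1)
      (fun n => ae_of_all _ fun ω => le_of_eq (norm_cexp_I_mul ξ _)) ?_
    filter_upwards [hWcont] with ω hc
    have h1 : Tendsto (fun n => g n ω) atTop (nhds (Z ω)) := tendsto_dyadicApprox d (Z ω)
    exact (hcont.tendsto _).comp ((hc.tendsto (Z ω)).comp h1)
  have hφlim : ∀ z, Tendsto (fun n => ∫ ω, Complex.exp (Complex.I * ξ *
        (W ω (dyadicApprox d n z))) ∂P) atTop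
      (nhds (∫ ω, Complex.exp (Complex.I * ξ * (W ω z)) ∂P)) := by
    intro z
    refine tendsto_integral_of_dominated_convergence (fun _ => 1)
      (fun n => (hFm _).aestronglyMeasurable) (integrable_const 1)
      (fun n => ae_of_all _ fun ω => le_of_eq (norm_cexp_I_mul ξ _)) ?_
    filter_upwards [hWcont] with ω hc
    exact (hcont.tendsto _).comp ((hc.tendsto z).comp (tendsto_dyadicApprox d z))
  have hφb : ∀ c, ‖∫ ω', Complex.exp (Complex.I * ξ * (W ω' c)) ∂P‖ ≤ 1 := by
    intro c
    calc ‖∫ ω', Complex.exp (Complex.I * ξ * (W ω' c)) ∂P‖ ≤ 1 * (P Set.univ).toReal :=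
          norm_integral_le_of_norm_le_const
            (ae_of_all _ fun ω => le_of_eq (norm_cexp_I_mul ξ _))
      _ = 1 := by simp
  have hlimR : Tendsto (fun n => ∫ ω, (∫ ω', Complex.exp (Complex.I * ξ *
        (W ω' (g n ω))) ∂P) ∂P) atTop
      (nhds (∫ ω, (∫ ω', Complex.exp (Complex.I * ξ * (W ω' (Z ω))) ∂P) ∂P)) := by
    refine tendsto_integral_of_dominated_convergence (fun _ => 1)
      (fun n => (measurable_comp_of_countable_range (hgm n) (hgc n)
        (fun c => ∫ ω', Complex.exp (Complex.I * ξ * (W ω' c)) ∂P)).aestronglyMeasurable)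
      (integrable_const 1)
      (fun n => ae_of_all _ fun ω => hφb _) ?_
    exact ae_of_all _ fun ω => hφlim (Z ω)
  have hmain : ∫ ω, Complex.exp (Complex.I * ξ * (W ω (Z ω))) ∂P
      = ∫ ω, (∫ ω', Complex.exp (Complex.I * ξ * (W ω' (Z ω))) ∂P) ∂P := by
    refine tendsto_nhds_unique ?_ hlimR
    have : (fun n => ∫ ω, (∫ ω', Complex.exp (Complex.I * ξ * (W ω' (g n ω))) ∂P) ∂P)
        = fun n => ∫ ω, Complex.exp (Complex.I * ξ * (W ω (g n ω))) ∂P := by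
      ext n; exact (hstep n).symm
    rw [this]
    exact hlimL
  rw [hmain]
  exact integral_congr_ae (ae_of_all _ fun ω => hφeq (Z ω))
end

section
/- Let ν be a measure on (0,∞) with ∫₀^∞ min(y,1) ν(dy) < ∞, and define the measure ν^# on ℝ by ν^#(A) := ∫₀^∞ N(0,t)(A) ν(dt) for Borel sets A, where N(0,t) is the centered Gaussian distribution with variance t. Then for every ξ ∈ ℝ, ∫₀^∞ (exp(−½ξ²y) − 1) ν(dy) = ∫_{ℝ∖{0}} (exp(iξx) − 1 − iξx·1_{[−1,1]}(x)) ν^#(dx), and both integrals are absolutely convergent. -/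
open MeasureTheory ProbabilityTheory Real Set
open scoped ENNReal NNReal

lemma measurable_gaussianReal_family :
    Measurable (fun t : ℝ => gaussianReal 0 t.toNNReal) := by
  refine Measure.measurable_of_measurable_coe _ fun s hs => ?_
  have key : (fun t : ℝ => gaussianReal 0 t.toNNReal s)
      = fun t => if t ∈ Set.Ioi (0:ℝ) then
          ∫⁻ x in s, ENNReal.ofReal ((Real.sqrt (2 * π * (max t 0)))⁻¹
            * Real.exp (-(x - 0)^2 / (2 * (max t 0)))) ∂volume
        else Measure.dirac (0:ℝ) s := by
    ext t
    by_cases ht : t ∈ Set.Ioi (0:ℝ)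
    · rw [if_pos ht, gaussianReal_apply]
      · refine lintegral_congr fun x => ?_
        simp [gaussianPDF, gaussianPDFReal, Real.coe_toNNReal']
      · simp only [ne_eq, Real.toNNReal_eq_zero, not_le]
        exact ht
    · rw [if_neg ht]
      have h0 : t.toNNReal = 0 := by
        simp only [Real.toNNReal_eq_zero]
        exact le_of_not_gt ht
      rw [h0, gaussianReal_zero_var]
  rw [key]
  refine Measurable.ite measurableSet_Ioi ?_ measurable_const
  have hJ : Measurable (fun p : ℝ × ℝ =>
      ENNReal.ofReal ((Real.sqrt (2 * π * (max p.1 0)))⁻¹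
        * Real.exp (-(p.2 - 0)^2 / (2 * (max p.1 0))))) := by
    apply Measurable.ennreal_ofReal
    exact (((measurable_fst.max measurable_const).const_mul _).sqrt.inv).mul
      ((((measurable_snd.sub measurable_const).pow_const 2).neg.div
        ((measurable_fst.max measurable_const).const_mul 2)).exp)
  exact hJ.lintegral_prod_right' (ν := volume.restrict s)

noncomputable def gaussKernel : Kernel ℝ ℝ :=
  ⟨fun t => gaussianReal 0 t.toNNReal, measurable_gaussianReal_family⟩

instance : IsMarkovKernel gaussKernel :=
  ⟨fun _ => by
    rw [show ∀ t, gaussKernel t = gaussianReal 0 t.toNNReal from fun _ => rfl]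
    infer_instance⟩

lemma integral_cexp_gaussianReal {v : ℝ≥0} (hv : v ≠ 0) (ξ : ℝ) :
    ∫ x : ℝ, Complex.exp (Complex.I * ξ * x) ∂(gaussianReal 0 v)
      = ((Real.exp (-(ξ^2/2) * (v:ℝ)) : ℝ) : ℂ) := by
  have hv0 : (0:ℝ) < (v:ℝ) := NNReal.coe_pos.mpr (zero_lt_iff.mpr hv)
  have hvC : ((v:ℝ) : ℂ) ≠ 0 := by exact_mod_cast ne_of_gt hv0
  rw [gaussianReal_of_var_ne_zero _ hv]
  have hd : gaussianPDF 0 v = fun x => ((gaussianPDFReal 0 v x).toNNReal : ℝ≥0∞) := rfl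
  rw [hd, integral_withDensity_eq_integral_smul
    ((measurable_gaussianPDFReal 0 v).real_toNNReal) _]
  have hstep : ∀ x : ℝ, (gaussianPDFReal 0 v x).toNNReal • Complex.exp (Complex.I * ξ * x)
      = (((√(2 * π * (v:ℝ)))⁻¹ : ℝ) : ℂ)
        * Complex.exp ((-(1/(2*(v:ℝ))) : ℂ) * x^2 + (Complex.I*ξ) * x + 0) := by
    intro x
    rw [NNReal.smul_def, Real.coe_toNNReal _ (gaussianPDFReal_nonneg 0 v x),
      gaussianPDFReal]
    rw [Complex.real_smul]
    push_cast
    rw [mul_assoc, ← Complex.exp_add]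
    congr 1
    field_simp
    congr 1
    ring
  simp_rw [hstep]
  rw [integral_const_mul, integral_cexp_quadratic (by simp; positivity) (Complex.I*ξ) 0]
  have hπ : ((π : ℂ) / -(-(1/(2*((v:ℝ):ℂ))))) = (((2*π*(v:ℝ) : ℝ)) : ℂ) := by
    push_cast
    rw [neg_neg]
    field_simp
  rw [hπ]
  have hcpow : (((2*π*(v:ℝ) : ℝ)) : ℂ) ^ (1/2 : ℂ) = ((√(2*π*(v:ℝ)) : ℝ) : ℂ) := by
    rw [Real.sqrt_eq_rpow, Complex.ofReal_cpow (by positivity)]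
    norm_num
  rw [hcpow]
  have hexp : (0 : ℂ) - (Complex.I*ξ)^2/(4 * (-(1/(2*((v:ℝ):ℂ)))))
      = ((-(ξ^2/2) * (v:ℝ) : ℝ) : ℂ) := by
    push_cast
    rw [mul_pow, Complex.I_sq]
    field_simp
    ring
  rw [hexp, ← mul_assoc, ← Complex.ofReal_mul,
    inv_mul_cancel₀ (by positivity : (√(2*π*(v:ℝ)) : ℝ) ≠ 0)]
  rw [← Complex.ofReal_exp]
  simp

lemma gaussianReal_map_neg (v : ℝ≥0) :
    (gaussianReal 0 v).map (fun x : ℝ => -x) = gaussianReal 0 v := by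
  have h := gaussianReal_map_const_mul (μ := 0) (v := v) (-1)
  have h2 : (NNReal.mk ((-1:ℝ)^2) (sq_nonneg _)) = 1 := by ext; norm_num
  rw [h2, mul_zero, one_mul] at h
  convert h using 2
  funext x
  simp

lemma integral_indicator_id_gaussianReal (v : ℝ≥0) :
    ∫ x : ℝ, (Set.Icc (-1:ℝ) 1).indicator (fun t => (t:ℂ)) x ∂(gaussianReal 0 v) = 0 := by
  set g : ℝ → ℂ := (Set.Icc (-1:ℝ) 1).indicator (fun t => (t:ℂ)) with hg
  have hgm : Measurable g := (Complex.measurable_ofReal).indicator measurableSet_Icc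
  have h1 : ∫ x, g x ∂(gaussianReal 0 v) = ∫ x, g (-x) ∂(gaussianReal 0 v) := by
    conv_lhs => rw [← gaussianReal_map_neg v]
    rw [integral_map measurable_neg.aemeasurable
      (hgm.aestronglyMeasurable (μ := (gaussianReal 0 v).map (fun x : ℝ => -x)))]
  have h2 : ∀ x : ℝ, g (-x) = - g x := by
    intro x
    by_cases hx : x ∈ Set.Icc (-1:ℝ) 1
    · have hx' : -x ∈ Set.Icc (-1:ℝ) 1 := by
        simp only [Set.mem_Icc] at hx ⊢; constructor <;> linarith [hx.1, hx.2]
      rw [hg, Set.indicator_of_mem hx, Set.indicator_of_mem hx']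
      push_cast; ring
    · have hx' : -x ∉ Set.Icc (-1:ℝ) 1 := by
        simp only [Set.mem_Icc, not_and_or, not_le] at hx ⊢
        rcases hx with h | h
        · right; linarith
        · left; linarith
      rw [hg, Set.indicator_of_notMem hx, Set.indicator_of_notMem hx', neg_zero]
  simp_rw [h2, integral_neg] at h1
  linear_combination h1 / 2

lemma lk_integrand_bound (ξ x : ℝ) :
    ‖Complex.exp (Complex.I * ξ * x) - 1
        - Complex.I * ξ * (Set.Icc (-1:ℝ) 1).indicator (fun t => (t : ℂ)) x‖
      ≤ ((2 + |ξ|) * max (ξ^2) 1) * min (x^2) 1 := by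
  set C := (2 + |ξ|) * max (ξ^2) 1 with hC
  have habsI : ‖Complex.I * ξ * x‖ = |ξ| * |x| := by
    simp [abs_mul]
  have hnormexp : ‖Complex.exp (Complex.I * ξ * x)‖ = 1 := by
    rw [Complex.norm_exp]
    simp [Complex.exp_re]
  by_cases hx : |x| ≤ 1
  · have hxm : x ∈ Set.Icc (-1:ℝ) 1 := by
      rw [Set.mem_Icc]; constructor <;> [linarith [(abs_le.mp hx).1]; exact (abs_le.mp hx).2]
    rw [Set.indicator_of_mem hxm]
    have hx2 : x^2 ≤ 1 := by nlinarith [abs_nonneg x, sq_abs x]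
    have hmin : min (x^2) 1 = x^2 := min_eq_left hx2
    rw [hmin]
    by_cases hu : |ξ| * |x| ≤ 1
    · have h1 : ‖Complex.exp (Complex.I * ξ * x) - 1 - Complex.I * ξ * x‖
          ≤ ‖Complex.I * ξ * x‖ ^ 2 :=
        Complex.norm_exp_sub_one_sub_id_le (by rw [habsI]; exact hu)
      calc ‖Complex.exp (Complex.I * ξ * x) - 1 - Complex.I * ξ * x‖
          ≤ (|ξ| * |x|) ^ 2 := by rw [← habsI]; exact h1
        _ = ξ^2 * x^2 := by rw [mul_pow, sq_abs, sq_abs]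
        _ ≤ C * x^2 := by
            have : ξ^2 ≤ C := by
              nlinarith [abs_nonneg ξ, le_max_left (ξ^2) 1, le_max_right (ξ^2) 1]
            nlinarith [sq_nonneg x]
    · push_neg at hu
      have hb : ‖Complex.exp (Complex.I * ξ * x) - 1 - Complex.I * ξ * x‖ ≤ 2 + |ξ| := by
        calc ‖Complex.exp (Complex.I * ξ * x) - 1 - Complex.I * ξ * x‖
            ≤ ‖Complex.exp (Complex.I * ξ * x) - 1‖ + ‖Complex.I * ξ * (x:ℂ)‖ :=
              norm_sub_le _ _
          _ ≤ (‖Complex.exp (Complex.I * ξ * x)‖ + ‖(1:ℂ)‖) + |ξ| * |x| := by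
              refine add_le_add (norm_sub_le _ _) ?_
              rw [habsI]
          _ ≤ 2 + |ξ| := by
              rw [hnormexp, norm_one]
              nlinarith [abs_nonneg ξ, abs_nonneg x]
      refine hb.trans ?_
      have h3 : 1 < ξ^2 * x^2 := by nlinarith [abs_nonneg ξ, abs_nonneg x, sq_abs ξ, sq_abs x]
      have h4 : ξ^2 ≤ max (ξ^2) 1 := le_max_left _ _
      have h5 : ξ^2 * x^2 ≤ max (ξ^2) 1 * x^2 :=
        mul_le_mul_of_nonneg_right h4 (sq_nonneg x)
      nlinarith [abs_nonneg ξ]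
  · push_neg at hx
    have hxm : x ∉ Set.Icc (-1:ℝ) 1 := by
      rw [Set.mem_Icc]; intro h
      rcases abs_cases x with ⟨he, _⟩ | ⟨he, _⟩ <;> [linarith [h.2, he]; linarith [h.1, he]]
    rw [Set.indicator_of_notMem hxm, mul_zero, sub_zero]
    have hmin : min (x^2) 1 = 1 := min_eq_right (by nlinarith [sq_abs x])
    rw [hmin, mul_one]
    calc ‖Complex.exp (Complex.I * ξ * x) - 1‖
        ≤ ‖Complex.exp (Complex.I * ξ * x)‖ + ‖(1:ℂ)‖ := norm_sub_le _ _
      _ = 2 := by rw [hnormexp, norm_one]; norm_num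
      _ ≤ C := by nlinarith [abs_nonneg ξ, le_max_right (ξ^2) 1, le_max_left (ξ^2) 1]

lemma gaussianReal_toNNReal_eq_map {t : ℝ} (ht : 0 < t) :
    gaussianReal 0 t.toNNReal = (gaussianReal 0 1).map (fun x : ℝ => Real.sqrt t * x) := by
  have h := gaussianReal_map_const_mul (μ := 0) (v := 1) (Real.sqrt t)
  have h2 : (NNReal.mk ((Real.sqrt t)^2) (sq_nonneg _)) * 1 = t.toNNReal := by
    rw [mul_one]; ext
    simp [Real.sq_sqrt ht.le, Real.coe_toNNReal _ ht.le]
  rw [h2, mul_zero] at h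
  exact h.symm

lemma min_mul_le_helper {a b : ℝ} (ha : 0 ≤ a) (hb : 0 ≤ b) :
    min (a * b) 1 ≤ min a 1 * (b + 1) := by
  rcases le_total a 1 with h | h
  · rw [min_eq_left h]
    rcases le_total (a * b) 1 with h2 | h2
    · rw [min_eq_left h2]; nlinarith
    · rw [min_eq_right h2]; nlinarith
  · rw [min_eq_right h, one_mul]
    calc min (a * b) 1 ≤ 1 := min_le_right _ _
      _ ≤ b + 1 := by linarith

lemma snd_moment_gaussian_lt_top :
    ∫⁻ u : ℝ, ENNReal.ofReal (u^2 + 1) ∂(gaussianReal 0 1) < ⊤ := by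
  have hint : Integrable (fun u : ℝ => u^2 + 1) (gaussianReal 0 1) := by
    rw [gaussianReal_of_var_ne_zero _ one_ne_zero]
    rw [integrable_withDensity_iff (measurable_gaussianPDF 0 1)
      (ae_of_all _ fun x => ENNReal.ofReal_lt_top)]
    have heq : ∀ u : ℝ, (u^2 + 1) * ((gaussianPDF 0 1 u).toReal)
        = (√(2 * π))⁻¹ * ((u^2 + 1) * Real.exp (-(1/2) * u^2)) := by
      intro u
      rw [gaussianPDF, ENNReal.toReal_ofReal (gaussianPDFReal_nonneg 0 1 u), gaussianPDFReal]
      push_cast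
      ring_nf
    simp_rw [heq]
    apply Integrable.const_mul
    have h1 : Integrable (fun u : ℝ => u^2 * Real.exp (-(1/2) * u^2)) volume := by
      have := integrable_rpow_mul_exp_neg_mul_sq (b := 1/2) (by norm_num) (s := 2) (by norm_num)
      have heq2 : ∀ u : ℝ, u ^ (2:ℝ) * Real.exp (-(1/2) * u^2)
          = u^2 * Real.exp (-(1/2) * u^2) := by
        intro u
        rw [← Real.rpow_natCast u 2]
        norm_num
      simpa [heq2] using this
    have h2 : Integrable (fun u : ℝ => Real.exp (-(1/2) * u^2)) volume :=
      integrable_exp_neg_mul_sq (by norm_num)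
    have := h1.add h2
    refine this.congr (ae_of_all _ fun u => ?_)
    simp only [Pi.add_apply]
    ring_nf
  exact hint.lintegral_lt_top

lemma lintegral_min_sq_gaussian_le {t : ℝ} (ht : 0 < t) {C : ℝ} (hC : 0 ≤ C) :
    ∫⁻ x : ℝ, ENNReal.ofReal (C * min (x^2) 1) ∂(gaussianReal 0 t.toNNReal)
      ≤ ENNReal.ofReal (C * min t 1)
          * ∫⁻ u : ℝ, ENNReal.ofReal (u^2 + 1) ∂(gaussianReal 0 1) := by
  have hmeas : Measurable fun x : ℝ => ENNReal.ofReal (C * min (x^2) 1) :=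
    (((measurable_id.pow_const 2).min measurable_const).const_mul C).ennreal_ofReal
  rw [gaussianReal_toNNReal_eq_map ht, lintegral_map hmeas (measurable_const_mul _)]
  have hpt : ∀ u : ℝ, ENNReal.ofReal (C * min ((Real.sqrt t * u)^2) 1)
      ≤ ENNReal.ofReal (C * min t 1) * ENNReal.ofReal (u^2 + 1) := by
    intro u
    have h1 : (Real.sqrt t * u)^2 = t * u^2 := by
      rw [mul_pow, Real.sq_sqrt ht.le]
    rw [h1, ← ENNReal.ofReal_mul (by positivity)]
    apply ENNReal.ofReal_le_ofReal
    have h2 : min (t * u^2) 1 ≤ min t 1 * (u^2 + 1) :=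
      min_mul_le_helper ht.le (sq_nonneg u)
    calc C * min (t * u^2) 1 ≤ C * (min t 1 * (u^2 + 1)) :=
          mul_le_mul_of_nonneg_left h2 hC
      _ = C * min t 1 * (u^2 + 1) := by ring
  calc ∫⁻ u, ENNReal.ofReal (C * min ((Real.sqrt t * u)^2) 1) ∂(gaussianReal 0 1)
      ≤ ∫⁻ u, ENNReal.ofReal (C * min t 1) * ENNReal.ofReal (u^2 + 1) ∂(gaussianReal 0 1) :=
        lintegral_mono hpt
    _ = ENNReal.ofReal (C * min t 1) * ∫⁻ u, ENNReal.ofReal (u^2 + 1) ∂(gaussianReal 0 1) :=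
        lintegral_const_mul' _ _ ENNReal.ofReal_ne_top

/-- Let `ν` be a measure on `(0,∞)` with `∫ min(y,1) ν(dy) < ∞` and let
`ν^#(A) := ∫₀^∞ N(0,t)(A) ν(dt)` be its Gaussian mixture. Then for every `ξ ∈ ℝ`,
`∫₀^∞ (exp(−½ξ²y) − 1) ν(dy) = ∫_{ℝ∖{0}} (exp(iξx) − 1 − iξx·1_{[−1,1]}(x)) ν^#(dx)`,
and both integrals are absolutely convergent. -/
theorem gaussian_mixture_levy_khinchin_integrand_identity
    (ν : Measure ℝ) (hν_supp : ν (Set.Iic 0) = 0)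
    (hν_int : ∫⁻ y, ENNReal.ofReal (min y 1) ∂ν < ⊤)
    (ξ : ℝ) :
    IntegrableOn (fun y => Real.exp (-(ξ ^ 2 / 2) * y) - 1) (Set.Ioi 0) ν ∧
    IntegrableOn
      (fun x : ℝ => Complex.exp (Complex.I * ξ * x) - 1
        - Complex.I * ξ * (Set.Icc (-1 : ℝ) 1).indicator (fun t => (t : ℂ)) x)
      {(0 : ℝ)}ᶜ (ν.bind fun t => (gaussianReal 0 (Real.toNNReal t) : Measure ℝ)) ∧
    (↑(∫ y in Set.Ioi (0 : ℝ), (Real.exp (-(ξ ^ 2 / 2) * y) - 1) ∂ν) : ℂ)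
      = ∫ x in {(0 : ℝ)}ᶜ,
          (Complex.exp (Complex.I * ξ * x) - 1
            - Complex.I * ξ * (Set.Icc (-1 : ℝ) 1).indicator (fun t => (t : ℂ)) x)
          ∂(ν.bind fun t => (gaussianReal 0 (Real.toNNReal t) : Measure ℝ)) := by
  have hker : Measurable (fun t : ℝ => gaussianReal 0 t.toNNReal) :=
    measurable_gaussianReal_family
  have hae : ∀ᵐ t ∂ν, 0 < t := by
    rw [ae_iff]
    convert hν_supp using 2
    ext t; simp [not_lt]
  -- sigma-finiteness of ν
  have hfin : ∀ ε : ℝ, 0 < ε → ν (Set.Ioi ε) < ⊤ := by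
    intro ε hε
    have h1 : ENNReal.ofReal (min ε 1) * ν (Set.Ioi ε)
        ≤ ∫⁻ y, ENNReal.ofReal (min y 1) ∂ν := by
      calc ENNReal.ofReal (min ε 1) * ν (Set.Ioi ε)
          = ∫⁻ _ in Set.Ioi ε, ENNReal.ofReal (min ε 1) ∂ν := (setLIntegral_const _ _).symm
        _ ≤ ∫⁻ y in Set.Ioi ε, ENNReal.ofReal (min y 1) ∂ν := by
            refine setLIntegral_mono
              ((measurable_id.min measurable_const).ennreal_ofReal) fun y hy => ?_
            exact ENNReal.ofReal_le_ofReal (min_le_min (le_of_lt hy) le_rfl)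
        _ ≤ _ := setLIntegral_le_lintegral _ _
    refine ENNReal.lt_top_of_mul_ne_top_right (h1.trans_lt hν_int).ne ?_
    simp only [ne_eq, ENNReal.ofReal_eq_zero, not_le]
    exact lt_min hε one_pos
  haveI hsf : SigmaFinite ν := by
    refine ⟨⟨⟨fun n => Set.Iic 0 ∪ Set.Ioi (1/(n+1) : ℝ), fun _ => trivial, fun n => ?_, ?_⟩⟩⟩
    · calc ν (Set.Iic 0 ∪ Set.Ioi (1/(n+1) : ℝ))
          ≤ ν (Set.Iic 0) + ν (Set.Ioi (1/(n+1) : ℝ)) := measure_union_le _ _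
        _ < ⊤ := by
            rw [hν_supp, zero_add]
            exact hfin _ (by positivity)
    · ext x
      simp only [Set.mem_iUnion, Set.mem_union, Set.mem_Iic, Set.mem_Ioi, Set.mem_univ, iff_true]
      rcases le_or_gt x 0 with h | h
      · exact ⟨0, Or.inl h⟩
      · obtain ⟨n, hn⟩ := exists_nat_one_div_lt h
        exact ⟨n, Or.inr hn⟩
  -- Part 1
  have hpart1 : IntegrableOn (fun y => Real.exp (-(ξ ^ 2 / 2) * y) - 1) (Set.Ioi 0) ν := by
    set a := ξ^2/2 with ha
    have ha0 : 0 ≤ a := by positivity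
    have hgint : Integrable (fun y => max a 1 * min y 1) (ν.restrict (Set.Ioi 0)) := by
      refine ⟨(continuous_const.mul (continuous_id.min continuous_const)).aestronglyMeasurable, ?_⟩
      rw [hasFiniteIntegral_iff_norm]
      calc ∫⁻ y, ENNReal.ofReal ‖max a 1 * min y 1‖ ∂(ν.restrict (Set.Ioi 0))
          ≤ ∫⁻ y, ENNReal.ofReal (max a 1) * ENNReal.ofReal (min y 1) ∂(ν.restrict (Set.Ioi 0)) := by
            refine lintegral_mono_ae
              ((ae_restrict_mem measurableSet_Ioi).mono fun y hy => ?_)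
            have hy0 : (0:ℝ) < y := hy
            have hnn : 0 ≤ max a 1 * min y 1 :=
              mul_nonneg (le_trans zero_le_one (le_max_right _ _))
                (le_min hy0.le zero_le_one)
            rw [← ENNReal.ofReal_mul (le_trans zero_le_one (le_max_right _ _))]
            refine ENNReal.ofReal_le_ofReal ?_
            rw [Real.norm_eq_abs, abs_of_nonneg hnn]
        _ = ENNReal.ofReal (max a 1) * ∫⁻ y, ENNReal.ofReal (min y 1) ∂(ν.restrict (Set.Ioi 0)) :=
            lintegral_const_mul' _ _ ENNReal.ofReal_ne_top
        _ ≤ ENNReal.ofReal (max a 1) * ∫⁻ y, ENNReal.ofReal (min y 1) ∂ν := by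
            gcongr
            exact Measure.restrict_le_self
        _ < ⊤ := ENNReal.mul_lt_top ENNReal.ofReal_lt_top hν_int
    refine Integrable.mono' hgint
      (((Real.continuous_exp.comp (continuous_const.mul continuous_id)).sub
        continuous_const).aestronglyMeasurable) ?_
    refine (ae_restrict_mem measurableSet_Ioi).mono fun y hy => ?_
    have hy0 : (0:ℝ) < y := hy
    have hexp1 : Real.exp (-(ξ^2/2) * y) ≤ 1 := by
      rw [Real.exp_le_one_iff]
      nlinarith
    have hexp2 : 1 - Real.exp (-(ξ^2/2) * y) ≤ a * y := by
      have := Real.add_one_le_exp (-(ξ^2/2) * y)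
      nlinarith
    rw [Real.norm_eq_abs, abs_of_nonpos (by linarith)]
    have hpos : 0 < Real.exp (-(ξ^2/2) * y) := Real.exp_pos _
    rcases le_total y 1 with h | h
    · rw [min_eq_left h]
      calc -(Real.exp (-(ξ^2/2) * y) - 1) = 1 - Real.exp (-(ξ^2/2) * y) := by ring
        _ ≤ a * y := hexp2
        _ ≤ max a 1 * y := mul_le_mul_of_nonneg_right (le_max_left _ _) hy0.le
    · rw [min_eq_right h]
      calc -(Real.exp (-(ξ^2/2) * y) - 1) = 1 - Real.exp (-(ξ^2/2) * y) := by ring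
        _ ≤ 1 := by linarith
        _ ≤ max a 1 * 1 := by rw [mul_one]; exact le_max_right _ _
  -- Part 2
  set fC : ℝ → ℂ := fun x => Complex.exp (Complex.I * ξ * x) - 1
      - Complex.I * ξ * (Set.Icc (-1 : ℝ) 1).indicator (fun t => (t : ℂ)) x with hfCdef
  have hfCmeas : Measurable fC := by
    refine Measurable.sub (Measurable.sub ?_ measurable_const) ?_
    · exact Complex.measurable_exp.comp (measurable_const.mul Complex.measurable_ofReal)
    · exact measurable_const.mul (Complex.measurable_ofReal.indicator measurableSet_Icc)
  set C := (2 + |ξ|) * max (ξ^2) 1 with hCdef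
  have hC0 : 0 ≤ C := by positivity
  set B := ∫⁻ u : ℝ, ENNReal.ofReal (u^2 + 1) ∂(gaussianReal 0 1) with hBdef
  have hBlt : B < ⊤ := snd_moment_gaussian_lt_top
  have hint2 : Integrable fC (ν.bind fun t => (gaussianReal 0 (Real.toNNReal t) : Measure ℝ)) := by
    refine ⟨hfCmeas.aestronglyMeasurable, ?_⟩
    rw [hasFiniteIntegral_iff_norm]
    calc ∫⁻ x, ENNReal.ofReal ‖fC x‖
          ∂(ν.bind fun t => (gaussianReal 0 (Real.toNNReal t) : Measure ℝ))
        = ∫⁻ t, ∫⁻ x, ENNReal.ofReal ‖fC x‖ ∂(gaussianReal 0 t.toNNReal) ∂ν :=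
          Measure.lintegral_bind hker.aemeasurable (hfCmeas.norm.ennreal_ofReal.aemeasurable)
      _ ≤ ∫⁻ t, (ENNReal.ofReal C * B) * ENNReal.ofReal (min t 1) ∂ν := by
          refine lintegral_mono_ae (hae.mono fun t ht => ?_)
          calc ∫⁻ x, ENNReal.ofReal ‖fC x‖ ∂(gaussianReal 0 t.toNNReal)
              ≤ ∫⁻ x, ENNReal.ofReal (C * min (x^2) 1) ∂(gaussianReal 0 t.toNNReal) :=
                lintegral_mono fun x => ENNReal.ofReal_le_ofReal (lk_integrand_bound ξ x)
            _ ≤ ENNReal.ofReal (C * min t 1) * B := lintegral_min_sq_gaussian_le ht hC0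
            _ = (ENNReal.ofReal C * B) * ENNReal.ofReal (min t 1) := by
                rw [ENNReal.ofReal_mul hC0]
                ring
      _ = (ENNReal.ofReal C * B) * ∫⁻ t, ENNReal.ofReal (min t 1) ∂ν :=
          lintegral_const_mul' _ _ (ENNReal.mul_ne_top ENNReal.ofReal_ne_top hBlt.ne)
      _ < ⊤ := ENNReal.mul_lt_top (ENNReal.mul_lt_top ENNReal.ofReal_lt_top hBlt) hν_int
  have hpart2 : IntegrableOn fC {(0 : ℝ)}ᶜ
      (ν.bind fun t => (gaussianReal 0 (Real.toNNReal t) : Measure ℝ)) :=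
    hint2.integrableOn
  -- the bind measure gives no mass to {0}
  have h0 : (ν.bind fun t => (gaussianReal 0 (Real.toNNReal t) : Measure ℝ)) {(0:ℝ)} = 0 := by
    rw [Measure.bind_apply (measurableSet_singleton 0) hker.aemeasurable]
    refine (lintegral_eq_zero_iff ?_).mpr ?_
    · exact (Measure.measurable_coe (measurableSet_singleton 0)).comp hker
    refine hae.mono fun t ht => ?_
    have hv : t.toNNReal ≠ 0 := by
      simp only [ne_eq, Real.toNNReal_eq_zero, not_le]
      exact ht
    exact (gaussianReal_absolutelyContinuous 0 hv) (measure_singleton 0)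
  have hres : (ν.bind fun t => (gaussianReal 0 (Real.toNNReal t) : Measure ℝ)).restrict {(0:ℝ)}ᶜ
      = ν.bind fun t => (gaussianReal 0 (Real.toNNReal t) : Measure ℝ) := by
    have hu : ({(0:ℝ)}ᶜ : Set ℝ)
        =ᵐ[ν.bind fun t => (gaussianReal 0 (Real.toNNReal t) : Measure ℝ)] Set.univ := by
      rw [ae_eq_univ, compl_compl]
      exact h0
    rw [Measure.restrict_congr_set hu, Measure.restrict_univ]
  have hresν : ν.restrict (Set.Ioi 0) = ν := by
    have hu : (Set.Ioi (0:ℝ)) =ᵐ[ν] Set.univ := by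
      rw [ae_eq_univ, Set.compl_Ioi]
      exact hν_supp
    rw [Measure.restrict_congr_set hu, Measure.restrict_univ]
  -- inner identity
  have hinner : ∀ t : ℝ, 0 < t → ∫ x, fC x ∂(gaussianReal 0 t.toNNReal)
      = ((Real.exp (-(ξ^2/2) * t) - 1 : ℝ) : ℂ) := by
    intro t ht
    have hv : t.toNNReal ≠ 0 := by
      simp only [ne_eq, Real.toNNReal_eq_zero, not_le]
      exact ht
    have hexpmeas : Measurable fun x : ℝ => Complex.exp (Complex.I * ξ * x) :=
      Complex.measurable_exp.comp (measurable_const.mul Complex.measurable_ofReal)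
    have hint_exp : Integrable (fun x : ℝ => Complex.exp (Complex.I * ξ * x))
        (gaussianReal 0 t.toNNReal) := by
      refine Integrable.mono' (integrable_const 1) hexpmeas.aestronglyMeasurable
        (ae_of_all _ fun x => ?_)
      rw [Complex.norm_exp]
      simp [Complex.exp_re]
    have hint_ind : Integrable
        (fun x : ℝ => Complex.I * ξ * (Set.Icc (-1:ℝ) 1).indicator (fun t => (t:ℂ)) x)
        (gaussianReal 0 t.toNNReal) := by
      refine Integrable.mono' (integrable_const (1 * |ξ| * 1 : ℝ))
        ((measurable_const.mul
          (Complex.measurable_ofReal.indicator measurableSet_Icc)).aestronglyMeasurable)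
        (ae_of_all _ fun x => ?_)
      rw [norm_mul, norm_mul]
      gcongr
      · simp
      · simp
      · by_cases hx : x ∈ Set.Icc (-1:ℝ) 1
        · rw [Set.indicator_of_mem hx]
          simp only [Complex.norm_real, Real.norm_eq_abs]
          exact abs_le.mpr ⟨hx.1, hx.2⟩
        · rw [Set.indicator_of_notMem hx]
          simp
    have hint_sub : Integrable (fun x : ℝ => Complex.exp (Complex.I * ξ * x) - 1)
        (gaussianReal 0 t.toNNReal) := hint_exp.sub (integrable_const 1)
    rw [hfCdef]
    rw [integral_sub hint_sub hint_ind,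
      integral_sub hint_exp (integrable_const 1),
      integral_const, integral_const_mul, integral_indicator_id_gaussianReal, mul_zero, sub_zero,
      integral_cexp_gaussianReal hv ξ]
    have hcoe : (t.toNNReal : ℝ) = t := Real.coe_toNNReal _ ht.le
    rw [hcoe]
    simp [measure_univ]
  -- identity
  have key : (↑(∫ y in Set.Ioi (0 : ℝ), (Real.exp (-(ξ ^ 2 / 2) * y) - 1) ∂ν) : ℂ)
      = ∫ x in {(0 : ℝ)}ᶜ, fC x
          ∂(ν.bind fun t => (gaussianReal 0 (Real.toNNReal t) : Measure ℝ)) := by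
    rw [hresν, hres]
    have hbind : (ν.bind fun t => (gaussianReal 0 (Real.toNNReal t) : Measure ℝ))
        = (ν ⊗ₘ gaussKernel).snd := by
      ext s hs
      rw [Measure.bind_apply hs hker.aemeasurable, Measure.snd_apply hs,
        Measure.compProd_apply (measurable_snd hs)]
      rfl
    have hint2' : Integrable (fun p : ℝ × ℝ => fC p.2) (ν ⊗ₘ gaussKernel) := by
      have h := hint2
      rw [hbind, Measure.snd] at h
      exact (integrable_map_measure hfCmeas.aestronglyMeasurable
        measurable_snd.aemeasurable).mp h
    rw [hbind, Measure.snd,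
      integral_map measurable_snd.aemeasurable hfCmeas.aestronglyMeasurable,
      Measure.integral_compProd hint2']
    have hcongr : ∫ t, ∫ x, fC x ∂(gaussKernel t) ∂ν
        = ∫ t, ((Real.exp (-(ξ^2/2) * t) - 1 : ℝ) : ℂ) ∂ν :=
      integral_congr_ae (hae.mono fun t ht => hinner t ht)
    rw [hcongr]
    exact (integral_ofReal (𝕜 := ℂ)
      (f := fun t => Real.exp (-(ξ^2/2) * t) - 1)).symm
  exact ⟨hpart1, hpart2, key⟩
end

section
/- Let W : Ω × ℝ₊^d → ℝ be a jointly measurable random field with P-almost surely continuous paths such that for every deterministic z ∈ ℝ₊^d the law of W(z) is N(0, σ_W²(z)), where σ_W(z) ≤ Σ_{j=1}^N c_j · z₁^{α₁^{(j)}} ⋯ z_d^{α_d^{(j)}} for all z ∈ ℝ₊^d, with N ∈ ℕ, c_j ≥ 0, α^{(j)} ∈ ℝ₊^d. Let Z₁,…,Z_d be mutually independent random variables taking values in ℕ₀ = {0,1,2,…}, independent of the σ-algebra generated by W, such that P(Z_i = k) ≤ C·k^{−η_i} for all integers k ≥ K, for constants C, K > 0 and η_i > 0. Set a := min{(η_i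 − 1)/α_i^{(j)} : 1 ≤ i ≤ d, 1 ≤ j ≤ N, α_i^{(j)} ≠ 0} (and a := +∞ if all α_i^{(j)} = 0). Then for every p ∈ [1, a), E[|W(Z₁,…,Z_d)|^p] < ∞. -/
set_option maxHeartbeats 1000000

open MeasureTheory ProbabilityTheory Real Set
open scoped ENNReal NNReal


lemma aux_tsum_pi_prod : ∀ {d : ℕ} (g : Fin d → ℕ → ℝ≥0∞),
    ∑' k : Fin d → ℕ, ∏ i, g i (k i) = ∏ i, ∑' n, g i n := by
  intro d
  induction d with
  | zero =>
    intro g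
    rw [tsum_eq_single (default : Fin 0 → ℕ) (fun b hb => absurd (Subsingleton.elim b default) hb)]
    simp
  | succ d ih =>
    intro g
    rw [← (Fin.consEquiv (fun _ : Fin (d+1) => ℕ)).tsum_eq, ENNReal.tsum_prod']
    simp only [Fin.consEquiv_apply]
    have : ∀ (n : ℕ) (r : Fin d → ℕ),
        (∏ i, g i (Fin.cons (α := fun _ => ℕ) n r i)) = g 0 n * ∏ i : Fin d, g i.succ (r i) := by
      intro n r
      rw [Fin.prod_univ_succ]
      simp
    simp_rw [this]
    rw [Fin.prod_univ_succ]
    simp_rw [ENNReal.tsum_mul_left]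
    rw [ENNReal.tsum_mul_right, ih (fun i => g i.succ)]

lemma aux_integrable_abs_rpow {b s : ℝ} (hb : 0 < b) (hs : -1 < s) :
    Integrable (fun x : ℝ => |x| ^ s * Real.exp (-b * x ^ 2)) := by
  have hmeas : Measurable fun x : ℝ => |x| ^ s * Real.exp (-b * x ^ 2) :=
    ((measurable_abs.pow_const s).mul
      (((measurable_id.pow_const 2).const_mul (-b)).exp))
  have hIoi : IntegrableOn (fun x : ℝ => |x| ^ s * Real.exp (-b * x ^ 2)) (Ioi 0) := by
    refine (integrableOn_rpow_mul_exp_neg_mul_sq hb hs).congr_fun ?_ measurableSet_Ioi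
    intro x hx
    simp [abs_of_pos (mem_Ioi.mp hx)]
  have hIci : IntegrableOn (fun x : ℝ => |x| ^ s * Real.exp (-b * x ^ 2)) (Ici 0) :=
    (integrableOn_Ici_iff_integrableOn_Ioi (by simp)).mpr hIoi
  have hIio : IntegrableOn (fun x : ℝ => |x| ^ s * Real.exp (-b * x ^ 2)) (Iio 0) := by
    have m : MeasurableEmbedding fun x : ℝ => -x := (Homeomorph.neg ℝ).measurableEmbedding
    rw [← Measure.map_neg_eq_self (volume : Measure ℝ), IntegrableOn,
      m.restrict_map, m.integrable_map_iff]
    simp only [Function.comp_def, abs_neg, neg_sq, neg_preimage, neg_Iio, neg_zero]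
    exact hIoi
  rw [← integrableOn_univ, ← @Iio_union_Ici _ _ (0 : ℝ), integrableOn_union]
  exact ⟨hIio, hIci⟩

lemma aux_Mp_lt_top {p : ℝ} (hp : 0 ≤ p) :
    ∫⁻ x, ENNReal.ofReal (|x| ^ p) ∂(gaussianReal 0 1) < ⊤ := by
  rw [gaussianReal_of_var_ne_zero 0 one_ne_zero]
  have hg : Measurable fun x : ℝ => ENNReal.ofReal (|x| ^ p) :=
    ENNReal.measurable_ofReal.comp (measurable_abs.pow_const p)
  rw [lintegral_withDensity_eq_lintegral_mul _ (measurable_gaussianPDF 0 1) hg]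
  have hint : Integrable (fun x : ℝ => gaussianPDFReal 0 1 x * |x| ^ p) := by
    have : (fun x : ℝ => gaussianPDFReal 0 1 x * |x| ^ p)
        = fun x => (Real.sqrt (2 * π))⁻¹ * (|x| ^ p * Real.exp (-(1/2) * x ^ 2)) := by
      funext x
      simp only [gaussianPDFReal]
      push_cast
      ring_nf
    rw [this]
    exact (aux_integrable_abs_rpow (by norm_num) (by linarith)).const_mul _
  calc ∫⁻ x, (gaussianPDF 0 1 * fun x => ENNReal.ofReal (|x| ^ p)) x
      = ∫⁻ x, ENNReal.ofReal (gaussianPDFReal 0 1 x * |x| ^ p) := by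
        simp only [Pi.mul_apply, gaussianPDF]
        congr 1
        funext x
        rw [ENNReal.ofReal_mul (gaussianPDFReal_nonneg 0 1 x)]
    _ < ⊤ := by
        have h := hint.hasFiniteIntegral
        rw [hasFiniteIntegral_iff_ofReal ?_] at h
        · exact h
        · filter_upwards with x
          exact mul_nonneg (gaussianPDFReal_nonneg 0 1 x) (Real.rpow_nonneg (abs_nonneg x) p)

lemma aux_gauss_scale (v : ℝ≥0) {p : ℝ} (hp : 0 ≤ p) :
    ∫⁻ x, ENNReal.ofReal (|x| ^ p) ∂(gaussianReal 0 v)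
      = ENNReal.ofReal (Real.sqrt v ^ p) * ∫⁻ x, ENNReal.ofReal (|x| ^ p) ∂(gaussianReal 0 1) := by
  set c : ℝ := Real.sqrt v with hc
  have hc0 : 0 ≤ c := Real.sqrt_nonneg _
  have hmap : (gaussianReal 0 1).map (c * ·) = gaussianReal 0 v := by
    rw [gaussianReal_map_const_mul c]
    congr 1
    · simp
    · ext
      simp [hc, Real.sq_sqrt v.2]
  have hg : Measurable fun x : ℝ => ENNReal.ofReal (|x| ^ p) :=
    ENNReal.measurable_ofReal.comp (measurable_abs.pow_const p)
  rw [← hmap, lintegral_map hg (measurable_const_mul c)]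
  have : ∀ x : ℝ, ENNReal.ofReal (|c * x| ^ p)
      = ENNReal.ofReal (c ^ p) * ENNReal.ofReal (|x| ^ p) := by
    intro x
    rw [abs_mul, abs_of_nonneg hc0, Real.mul_rpow hc0 (abs_nonneg x),
      ENNReal.ofReal_mul (Real.rpow_nonneg hc0 p)]
  simp_rw [this]
  rw [lintegral_const_mul _ hg]

lemma aux_indep_set_lintegral {Ω : Type*} [mΩ : MeasurableSpace Ω] (P : Measure Ω)
    [IsProbabilityMeasure P] {m₁ m₂ : MeasurableSpace Ω} (hindep : Indep m₁ m₂ P)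
    {A : Set Ω} (hA : MeasurableSet[mΩ] A) (hA1 : MeasurableSet[m₁] A)
    {g : Ω → ℝ≥0∞} (hg : Measurable[mΩ] g) (hg2 : Measurable[m₂] g) :
    ∫⁻ ω in A, g ω ∂P = P A * ∫⁻ ω, g ω ∂P := by
  set f : Ω → ℝ≥0∞ := A.indicator (fun _ => (1 : ℝ≥0∞)) with hf
  have hfm : Measurable[mΩ] f := measurable_const.indicator hA
  have hfm1 : Measurable[m₁] f := measurable_const.indicator hA1
  have hIndepFun : IndepFun f g P := by
    rw [IndepFun_iff_Indep]
    exact indep_of_indep_of_le_right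
      (indep_of_indep_of_le_left hindep (measurable_iff_comap_le.mp hfm1))
      (measurable_iff_comap_le.mp hg2)
  have key := lintegral_mul_eq_lintegral_mul_lintegral_of_indepFun hfm hg hIndepFun (μ := P)
  have h1 : ∫⁻ ω, f ω ∂P = P A := lintegral_indicator_one hA
  have h2 : (fun ω => f ω * g ω) = A.indicator g := by
    funext ω
    by_cases hω : ω ∈ A <;> simp [hf, hω]
  have h3 : ∫⁻ ω, (f * g) ω ∂P = ∫⁻ ω in A, g ω ∂P := by
    have : (f * g) = A.indicator g := h2
    rw [this, lintegral_indicator hA]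
  rw [h3, h1] at key
  exact key

lemma aux_coord_sum {Ω : Type*} [MeasurableSpace Ω] (P : Measure Ω)
    [IsProbabilityMeasure P] (Zi : Ω → ℕ) (hZi : Measurable Zi)
    (C : ℝ) (K : ℕ) (hC : 0 < C) (hK : 0 < K) (ηi : ℝ)
    (htail : ∀ k : ℕ, K ≤ k → P {ω | Zi ω = k} ≤ ENNReal.ofReal (C * (k : ℝ) ^ (-ηi)))
    (s : ℝ) (hs : 0 ≤ s) (hcase : s = 0 ∨ s < ηi - 1) :
    ∑' n : ℕ, P {ω | Zi ω = n} * ENNReal.ofReal ((n : ℝ) ^ s) < ⊤ := by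
  rcases hcase with rfl | hlt
  · simp only [Real.rpow_zero, ENNReal.ofReal_one, mul_one]
    refine lt_of_le_of_lt ?_ (lt_of_le_of_lt le_rfl (by simp : (1 : ℝ≥0∞) < ⊤))
    have : ∀ n : ℕ, {ω | Zi ω = n} = Zi ⁻¹' {n} := fun n => rfl
    calc ∑' n : ℕ, P {ω | Zi ω = n} = ∑' n : ℕ, P (Zi ⁻¹' {n}) := by simp [this]
      _ ≤ P univ := tsum_measure_le_measure_univ
            (fun n => (hZi (measurableSet_singleton n)).nullMeasurableSet)
            (fun n m hnm => (Set.disjoint_left.mpr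
              (fun ω (h1 : Zi ω = n) (h2 : Zi ω = m) => hnm (h1.symm.trans h2))).aedisjoint)
      _ = 1 := measure_univ
  · set f : ℕ → ℝ≥0∞ := fun n => P {ω | Zi ω = n} * ENNReal.ofReal ((n : ℝ) ^ s) with hfdef
    set g : ℕ → ℝ≥0∞ := fun n => if n < K then f n else 0 with hgdef
    set h : ℕ → ℝ≥0∞ := fun n => if K ≤ n then ENNReal.ofReal (C * (n : ℝ) ^ (s - ηi)) else 0
      with hhdef
    have hfgh : ∀ n, f n ≤ g n + h n := by
      intro n
      by_cases hn : n < K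
      · simp only [hgdef, hhdef, if_pos hn, if_neg (by omega : ¬ K ≤ n), add_zero, le_refl]
      · have hKn : K ≤ n := by omega
        have hnpos : (0 : ℝ) < (n : ℝ) := by
          have : 0 < n := by omega
          exact_mod_cast this
        simp only [hgdef, hhdef, if_neg hn, if_pos hKn, zero_add]
        calc f n ≤ ENNReal.ofReal (C * (n : ℝ) ^ (-ηi)) * ENNReal.ofReal ((n : ℝ) ^ s) :=
              mul_le_mul_left (htail n hKn) _
          _ = ENNReal.ofReal (C * (n : ℝ) ^ (s - ηi)) := by
              rw [← ENNReal.ofReal_mul (by positivity)]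
              congr 1
              rw [mul_assoc, ← Real.rpow_add hnpos]
              ring_nf
    have hg_lt : ∑' n, g n < ⊤ := by
      rw [tsum_eq_sum (s := Finset.range K) (fun b hb => by
        simp only [hgdef]
        rw [if_neg (by simpa using hb)])]
      refine ENNReal.sum_lt_top.mpr fun n _ => ?_
      simp only [hgdef]
      split
      · exact ENNReal.mul_lt_top ((prob_le_one).trans_lt (by simp)) ENNReal.ofReal_lt_top
      · simp
    have hh_lt : ∑' n, h n < ⊤ := by
      have hinj : Function.Injective (fun n : ℕ => n + K) := fun a b hab => by
        simpa using hab
      have hsupp : ∀ m, m ∉ Set.range (fun n : ℕ => n + K) → h m = 0 := by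
        intro m hm
        have : ¬ K ≤ m := by
          intro hKm
          exact hm ⟨m - K, show m - K + K = m by omega⟩
        simp only [hhdef]
        rw [if_neg this]
      rw [← hinj.tsum_eq (Function.support_subset_iff'.mpr hsupp)]
      have hval : ∀ n : ℕ, h (n + K) = ENNReal.ofReal (C * ((n + K : ℕ) : ℝ) ^ (s - ηi)) := by
        intro n
        simp only [hhdef]
        rw [if_pos (by omega)]
      simp_rw [hval]
      have hsummable : Summable fun n : ℕ => C * ((n + K : ℕ) : ℝ) ^ (s - ηi) := by
        have h1 : Summable fun m : ℕ => (m : ℝ) ^ (s - ηi) :=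
          Real.summable_nat_rpow.mpr (by linarith)
        exact ((summable_nat_add_iff K).mpr h1).mul_left C
      rw [← ENNReal.ofReal_tsum_of_nonneg (fun n => by positivity) hsummable]
      exact ENNReal.ofReal_lt_top
    calc ∑' n, f n ≤ ∑' n, (g n + h n) := ENNReal.tsum_le_tsum hfgh
      _ = ∑' n, g n + ∑' n, h n := ENNReal.tsum_add
      _ < ⊤ := ENNReal.add_lt_top.mpr ⟨hg_lt, hh_lt⟩

lemma aux_rpow_sum_le {N : ℕ} (hN : 0 < N) (B : Fin N → ℝ) (hB : ∀ j, 0 ≤ B j)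
    {p : ℝ} (hp : 0 ≤ p) :
    (∑ j, B j) ^ p ≤ ∑ j, ((N : ℝ) * B j) ^ p := by
  obtain ⟨j₀, -, hj₀⟩ := Finset.exists_max_image Finset.univ B ⟨⟨0, hN⟩, Finset.mem_univ _⟩
  calc (∑ j, B j) ^ p ≤ ((N : ℝ) * B j₀) ^ p := by
        refine Real.rpow_le_rpow (Finset.sum_nonneg fun j _ => hB j) ?_ hp
        calc ∑ j, B j ≤ ∑ _j : Fin N, B j₀ :=
              Finset.sum_le_sum fun j _ => hj₀ j (Finset.mem_univ j)
          _ = (N : ℝ) * B j₀ := by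
              rw [Finset.sum_const, Finset.card_univ, Fintype.card_fin, nsmul_eq_mul]
    _ ≤ ∑ j, ((N : ℝ) * B j) ^ p :=
        Finset.single_le_sum
          (fun j _ => Real.rpow_nonneg (mul_nonneg (Nat.cast_nonneg N) (hB j)) p)
          (Finset.mem_univ j₀)
/-- **discrete-subordinator moment theorem.** Let `W` be a jointly
measurable, a.s. continuous random field on `ℝ₊^d` with `W(z) ∼ N(0, σ_W²(z))`, where
`σ_W(z) ≤ Σ_j c_j z₁^{α₁^{(j)}} ⋯ z_d^{α_d^{(j)}}`. Let `Z₁,…,Z_d` be mutually independent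
`ℕ`-valued random variables, independent of `W`, with `P(Z_i = k) ≤ C k^{−η_i}` for
integers `k ≥ K`. With `a := min{(η_i − 1)/α_i^{(j)} : α_i^{(j)} ≠ 0}` (`a = ∞` if all
exponents vanish), `E[|W(Z₁,…,Z_d)|^p] < ∞` for every `p ∈ [1, a)`. -/
theorem subordinated_GRF_pointwise_moments_discrete
    {Ω : Type*} [MeasurableSpace Ω] (P : Measure Ω) [IsProbabilityMeasure P]
    (d : ℕ) (W : Ω → (Fin d → NNReal) → ℝ)
    (hW : Measurable fun p : Ω × (Fin d → NNReal) => W p.1 p.2)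
    (hWcont : ∀ᵐ ω ∂P, Continuous (W ω))
    (σW : (Fin d → NNReal) → NNReal)
    (hWlaw : ∀ z : Fin d → NNReal,
      Measure.map (fun ω => W ω z) P = gaussianReal 0 (σW z ^ 2))
    (N : ℕ) (hN : 0 < N) (c : Fin N → ℝ) (hc : ∀ j, 0 ≤ c j)
    (α : Fin N → Fin d → ℝ) (hα : ∀ j i, 0 ≤ α j i)
    (hσW_bound : ∀ z : Fin d → NNReal,
      (σW z : ℝ) ≤ ∑ j, c j * ∏ i, (z i : ℝ) ^ (α j i))
    (Z : Fin d → Ω → ℕ) (hZ : ∀ i, Measurable (Z i))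
    (hZ_indep : iIndepFun Z P)
    (hZW_indep : Indep (⨆ i, MeasurableSpace.comap (Z i) inferInstance)
      (⨆ x : Fin d → NNReal, MeasurableSpace.comap (fun ω => W ω x) inferInstance) P)
    (C : ℝ) (K : ℕ) (hC : 0 < C) (hK : 0 < K) (η : Fin d → ℝ) (hη : ∀ i, 0 < η i)
    (hZ_tail : ∀ i, ∀ k : ℕ, K ≤ k →
      P {ω | Z i ω = k} ≤ ENNReal.ofReal (C * (k : ℝ) ^ (-η i)))
    (p : ℝ) (hp : 1 ≤ p)
    -- `p < a`, i.e. `p < (η_i − 1)/α_i^{(j)}` whenever `α_i^{(j)} ≠ 0`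
    (hpa : ∀ i j, α j i ≠ 0 → p < (η i - 1) / α j i) :
    ∫⁻ ω, ENNReal.ofReal (|W ω fun i => (Z i ω : NNReal)| ^ p) ∂P < ⊤ := by
  classical
  have hp0 : (0 : ℝ) ≤ p := le_trans zero_le_one hp
  set Mp : ℝ≥0∞ := ∫⁻ x, ENNReal.ofReal (|x| ^ p) ∂(gaussianReal 0 1) with hMp
  set z : (Fin d → ℕ) → (Fin d → ℝ≥0) := fun k i => ((k i : ℕ) : ℝ≥0) with hz
  set A : (Fin d → ℕ) → Set Ω := fun k => ⋂ i, Z i ⁻¹' {k i} with hA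
  have hWm : ∀ y : Fin d → ℝ≥0, Measurable fun ω => W ω y := fun y =>
    hW.comp (measurable_id.prodMk measurable_const)
  have hφ : Measurable fun x : ℝ => ENNReal.ofReal (|x| ^ p) :=
    ENNReal.measurable_ofReal.comp (measurable_abs.pow_const p)
  have hGm : ∀ y, Measurable fun ω => ENNReal.ofReal (|W ω y| ^ p) := fun y =>
    hφ.comp (hWm y)
  have hAmeas : ∀ k, MeasurableSet (A k) := fun k =>
    MeasurableSet.iInter fun i => (hZ i) (measurableSet_singleton (k i))
  have hZvec : Measurable fun ω => (fun i => (Z i ω : ℝ≥0)) :=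
    measurable_pi_lambda _ fun i => measurable_from_top.comp (hZ i)
  have hcover : (⋃ k : Fin d → ℕ, A k) = Set.univ := by
    ext ω
    simp only [hA, Set.mem_iUnion, Set.mem_iInter, Set.mem_preimage, Set.mem_singleton_iff,
      Set.mem_univ, iff_true]
    exact ⟨fun i => Z i ω, fun i => rfl⟩
  have hdisj : Pairwise (Function.onFun Disjoint A) := by
    intro k k' hkk'
    rw [Function.onFun, Set.disjoint_left]
    intro ω h1 h2
    apply hkk'
    funext i
    have e1 : Z i ω = k i := by simpa using Set.mem_iInter.mp h1 i
    have e2 : Z i ω = k' i := by simpa using Set.mem_iInter.mp h2 i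
    rw [← e1, e2]
  have hdec : ∫⁻ ω, ENNReal.ofReal (|W ω fun i => (Z i ω : ℝ≥0)| ^ p) ∂P
      = ∑' k : Fin d → ℕ,
          ∫⁻ ω in A k, ENNReal.ofReal (|W ω fun i => (Z i ω : ℝ≥0)| ^ p) ∂P := by
    rw [← setLIntegral_univ, ← hcover, lintegral_iUnion hAmeas hdisj]
  have hatomeq : ∀ k : Fin d → ℕ,
      ∫⁻ ω in A k, ENNReal.ofReal (|W ω fun i => (Z i ω : ℝ≥0)| ^ p) ∂P
        = P (A k) * ENNReal.ofReal ((σW (z k) : ℝ) ^ p) * Mp := by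
    intro k
    have hcongr : ∫⁻ ω in A k, ENNReal.ofReal (|W ω fun i => (Z i ω : ℝ≥0)| ^ p) ∂P
        = ∫⁻ ω in A k, ENNReal.ofReal (|W ω (z k)| ^ p) ∂P := by
      refine setLIntegral_congr_fun (hAmeas k) (fun ω hω => ?_)
      have hzz : (fun i => (Z i ω : ℝ≥0)) = z k := by
        funext i
        have : Z i ω = k i := by simpa using Set.mem_iInter.mp hω i
        simp [hz, this]
      rw [hzz]
    have hA1 : MeasurableSet[⨆ i, MeasurableSpace.comap (Z i) inferInstance] (A k) := by
      refine MeasurableSet.iInter fun i => ?_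
      exact le_iSup (fun i => MeasurableSpace.comap (Z i) inferInstance) i
        _ ⟨{k i}, measurableSet_singleton _, rfl⟩
    have hg2 : Measurable[⨆ x : Fin d → NNReal,
        MeasurableSpace.comap (fun ω => W ω x) inferInstance]
        fun ω => ENNReal.ofReal (|W ω (z k)| ^ p) := by
      have hWz : Measurable[⨆ x : Fin d → NNReal,
          MeasurableSpace.comap (fun ω => W ω x) inferInstance] fun ω => W ω (z k) :=
        measurable_iff_comap_le.mpr
          (le_iSup (fun x => MeasurableSpace.comap (fun ω => W ω x) inferInstance) (z k))
      exact hφ.comp hWz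
    have hmoment : ∫⁻ ω, ENNReal.ofReal (|W ω (z k)| ^ p) ∂P
        = ENNReal.ofReal ((σW (z k) : ℝ) ^ p) * Mp := by
      rw [← lintegral_map hφ (hWm (z k)), hWlaw (z k), aux_gauss_scale _ hp0]
      have hsq : Real.sqrt ((σW (z k) ^ 2 : ℝ≥0) : ℝ) = (σW (z k) : ℝ) := by
        rw [NNReal.coe_pow, Real.sqrt_sq (σW (z k)).coe_nonneg]
      rw [hsq]
    rw [hcongr, aux_indep_set_lintegral P hZW_indep (hAmeas k) hA1 (hGm (z k)) hg2,
      hmoment, mul_assoc]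
  -- the coefficient objects
  set D : Fin N → ℝ≥0∞ := fun j => ENNReal.ofReal (((N : ℝ) * c j) ^ p) with hD
  set E : Fin N → Fin d → ℕ → ℝ≥0∞ :=
    fun j i n => ENNReal.ofReal ((n : ℝ) ^ (α j i * p)) with hE
  set T : Fin N → Fin d → ℝ≥0∞ := fun j i => ∑' n, P (Z i ⁻¹' {n}) * E j i n with hT
  have hkey : ∀ k : Fin d → ℕ, P (A k) * ENNReal.ofReal ((σW (z k) : ℝ) ^ p)
      ≤ ∑ j, D j * ∏ i, (P (Z i ⁻¹' {k i}) * E j i (k i)) := by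
    intro k
    have hPk : P (A k) = ∏ i, P (Z i ⁻¹' {k i}) :=
      hZ_indep.meas_iInter fun i => ⟨{k i}, measurableSet_singleton _, rfl⟩
    have hprodnn : ∀ j : Fin N, (0 : ℝ) ≤ ∏ i, ((k i : ℕ) : ℝ) ^ (α j i) :=
      fun j => Finset.prod_nonneg fun i _ => Real.rpow_nonneg (Nat.cast_nonneg _) _
    have hBnn : ∀ j : Fin N, (0 : ℝ) ≤ c j * ∏ i, ((k i : ℕ) : ℝ) ^ (α j i) :=
      fun j => mul_nonneg (hc j) (hprodnn j)
    have hcoe : ∀ i, ((z k i : ℝ≥0) : ℝ) = ((k i : ℕ) : ℝ) := by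
      intro i; simp [hz]
    have hreal : ((σW (z k) : ℝ)) ^ p
        ≤ ∑ j, ((N : ℝ) * c j) ^ p * ∏ i, ((k i : ℕ) : ℝ) ^ (α j i * p) := by
      have h1 : ((σW (z k) : ℝ)) ^ p
          ≤ (∑ j, c j * ∏ i, ((k i : ℕ) : ℝ) ^ (α j i)) ^ p := by
        refine Real.rpow_le_rpow (σW (z k)).coe_nonneg ?_ hp0
        have := hσW_bound (z k)
        simpa only [hcoe] using this
      have h2 := aux_rpow_sum_le hN (fun j => c j * ∏ i, ((k i : ℕ) : ℝ) ^ (α j i)) hBnn hp0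
      refine h1.trans (h2.trans (le_of_eq (Finset.sum_congr rfl fun j _ => ?_)))
      rw [← mul_assoc,
        Real.mul_rpow (mul_nonneg (Nat.cast_nonneg N) (hc j)) (hprodnn j),
        ← Real.finset_prod_rpow _ _ (fun i _ => Real.rpow_nonneg (Nat.cast_nonneg _) _) p]
      congr 1
      refine Finset.prod_congr rfl fun i _ => ?_
      rw [Real.rpow_mul (Nat.cast_nonneg _)]
    calc P (A k) * ENNReal.ofReal ((σW (z k) : ℝ) ^ p)
        ≤ P (A k) * ENNReal.ofReal
            (∑ j, ((N : ℝ) * c j) ^ p * ∏ i, ((k i : ℕ) : ℝ) ^ (α j i * p)) :=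
          mul_le_mul_right (ENNReal.ofReal_le_ofReal hreal) _
      _ = ∑ j, D j * ∏ i, (P (Z i ⁻¹' {k i}) * E j i (k i)) := by
          rw [hPk, ENNReal.ofReal_sum_of_nonneg (fun j _ =>
            mul_nonneg (Real.rpow_nonneg (mul_nonneg (Nat.cast_nonneg N) (hc j)) p)
              (Finset.prod_nonneg fun i _ => Real.rpow_nonneg (Nat.cast_nonneg _) _)),
            Finset.mul_sum]
          refine Finset.sum_congr rfl fun j _ => ?_
          rw [ENNReal.ofReal_mul (Real.rpow_nonneg (mul_nonneg (Nat.cast_nonneg N) (hc j)) p),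
            ENNReal.ofReal_prod_of_nonneg (fun i _ => Real.rpow_nonneg (Nat.cast_nonneg _) _)]
          simp only [hD, hE]
          rw [Finset.prod_mul_distrib]
          ring
  have hTfin : ∀ j i, T j i < ⊤ := by
    intro j i
    show T j i < ⊤
    · rw [hT]
      have hsets : ∀ n : ℕ, Z i ⁻¹' {n} = {ω | Z i ω = n} := fun n => rfl
      simp only [hsets, hE]
      exact aux_coord_sum P (Z i) (hZ i) C K hC hK (η i) (hZ_tail i) (α j i * p)
        (mul_nonneg (hα j i) hp0)
        (by
          by_cases hij : α j i = 0
          · left; rw [hij, zero_mul]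
          · right
            have hαpos : 0 < α j i := lt_of_le_of_ne (hα j i) (Ne.symm hij)
            have hlt := hpa i j hij
            calc α j i * p = p * α j i := mul_comm _ _
              _ < η i - 1 := by rwa [← lt_div_iff₀ hαpos])
  have hsum_le : ∑' k : Fin d → ℕ, P (A k) * ENNReal.ofReal ((σW (z k) : ℝ) ^ p)
      ≤ ∑ j, D j * ∏ i, T j i := by
    refine le_trans (ENNReal.tsum_le_tsum hkey) ?_
    rw [Summable.tsum_finsetSum fun j _ => ENNReal.summable]
    refine le_of_eq (Finset.sum_congr rfl fun j _ => ?_)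
    rw [ENNReal.tsum_mul_left]
    congr 1
    exact aux_tsum_pi_prod fun i n => P (Z i ⁻¹' {n}) * E j i n
  have hfin : (∑ j, D j * ∏ i, T j i) < ⊤ :=
    ENNReal.sum_lt_top.mpr fun j _ =>
      ENNReal.mul_lt_top ENNReal.ofReal_lt_top
        (ENNReal.prod_lt_top fun i _ => hTfin j i)
  calc ∫⁻ ω, ENNReal.ofReal (|W ω fun i => (Z i ω : ℝ≥0)| ^ p) ∂P
      = ∑' k : Fin d → ℕ, P (A k) * ENNReal.ofReal ((σW (z k) : ℝ) ^ p) * Mp := by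
        rw [hdec]; exact tsum_congr hatomeq
    _ = (∑' k : Fin d → ℕ, P (A k) * ENNReal.ofReal ((σW (z k) : ℝ) ^ p)) * Mp :=
        ENNReal.tsum_mul_right
    _ ≤ (∑ j, D j * ∏ i, T j i) * Mp := mul_le_mul_left hsum_le _
    _ < ⊤ := ENNReal.mul_lt_top hfin (aux_Mp_lt_top hp0)
end
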